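/- Let R₁ → X₁ ⇉ X₀ be an S¹-central extension of Lie groupoids. For a principal S¹-bundle L → X₀ over the groupoid X₁ ⇉ X₀ (i.e., with a compatible X₁-action), the associated central extension (s*L ×_{X₁} t*L̄)/S¹ is trivial as a central extension; conversely, if for an S¹-bundle L → X₀ the central extension (s*L ×_{X₁} t*L̄)/S¹ admits a groupoid-homomorphism section of its projection to X₁, then L carries an action of X₁ ⇉ X₀ making it an S¹-bundle over the groupoid. -/

import Mathlib

/-!
STATEMENT 6. Exactness at `H¹(X₀, S¹)`: for a principal `S¹`-bundle
`L → X₀`, the central extension `τ₂(L) = (s*L ×_{X₁} t*L̄)/S¹` of `X₁ ⇉ X₀` is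
trivial (admits a multiplicative section) precisely when `L` carries an
`X₁`-action making it an `S¹`-bundle over the groupoid.  Smooth structure is
abstracted away; `S¹` is Mathlib's `Circle`.
-/

/-- A (Lie) groupoid with arrows `X₁` over objects `X₀`.  Smooth structure is
abstracted away; only the algebraic structure is retained. -/
structure PreGroupoid (X₁ : Type*) (X₀ : Type*) where
  s : X₁ → X₀
  t : X₁ → X₀
  e : X₀ → X₁
  inv : X₁ → X₁
  m : (x y : X₁) → t x = s y → X₁
  s_e : ∀ u, s (e u) = u
  t_e : ∀ u, t (e u) = u
  s_m : ∀ x y h, s (m x y h) = s x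
  t_m : ∀ x y h, t (m x y h) = t y
  s_inv : ∀ x, s (inv x) = t x
  t_inv : ∀ x, t (inv x) = s x
  m_assoc : ∀ x y z h₁ h₂ h₃ h₄, m (m x y h₁) z h₂ = m x (m y z h₃) h₄
  e_m : ∀ x h, m (e (s x)) x h = x
  m_e : ∀ x h, m x (e (t x)) h = x
  m_inv : ∀ x h, m x (inv x) h = e (s x)
  inv_m : ∀ x h, m (inv x) x h = e (t x)

/-- A (right) action of a groupoid `G` on a set `P` along an anchor map `a`. -/
structure GroupoidAction {X₁ X₀ : Type*} (G : PreGroupoid X₁ X₀) (P : Type*) where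
  a : P → X₀
  act : (p : P) → (γ : X₁) → a p = G.s γ → P
  a_act : ∀ p γ h, a (act p γ h) = G.t γ
  act_e : ∀ p h, act p (G.e (a p)) h = p
  act_m : ∀ p γ δ h₁ h₂ h₃ h₄, act (act p γ h₁) δ h₂ = act p (G.m γ δ h₃) h₄

/-- A `G`-torsor over `S`: a surjection `π : P → S` with a `G`-action which is
simply transitive on the fibres of `π`. -/
structure GroupoidTorsor {X₁ X₀ : Type*} (G : PreGroupoid X₁ X₀) (P : Type*) (S : Type*)
    extends GroupoidAction G P where
  π : P → S
  π_surj : Function.Surjective π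
  π_act : ∀ p γ h, π (act p γ h) = π p
  exists_act : ∀ p p', π p = π p' → ∃ γ h, act p γ h = p'
  act_free : ∀ p γ γ' h h', act p γ h = act p γ' h' → γ = γ'

namespace Stmt6

variable {X₁ X₀ L : Type*} (GX : PreGroupoid X₁ X₀)
  (aL : L → X₀) (smulL : Circle → L → L)

/-- The fibre product `s*L ×_{X₁} t*L̄`: triples `(x, l, l')` with
`l` over `s x` and `l'` over `t x`. -/
def FP : Type _ :=
  {p : X₁ × L × L // aL p.2.1 = GX.s p.1 ∧ aL p.2.2 = GX.t p.1}

/-- The (anti)diagonal `S¹`-relation on `s*L ×_{X₁} t*L̄` (recall the second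
copy carries the inverted action, so the anti-diagonal action is `z` on both
legs). -/
def diag : FP GX aL → FP GX aL → Prop := fun a b =>
  ∃ z : Circle, b.val = (a.val.1, smulL z a.val.2.1, smulL z a.val.2.2)

/-- The central extension `τ₂(L) = (s*L ×_{X₁} t*L̄)/S¹`. -/
def E : Type _ := Quot (diag GX aL smulL)

/-- The projection `τ₂(L) → X₁`. -/
def projE : E GX aL smulL → X₁ :=
  Quot.lift (fun a => a.val.1) (by rintro a b ⟨z, h⟩; show (a.val).1 = (b.val).1; rw [h])

/-- `IsMulE c₁ c₂ c₃` expresses that `c₃` is the product of `c₁` and `c₂` for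
the groupoid structure of the central extension `τ₂(L)`:  on representatives
with matching middle leg, `[x,l,l'] · [y,l',m'] = [xy,l,m']`. -/
def IsMulE (c₁ c₂ c₃ : E GX aL smulL) : Prop :=
  ∃ (x y : X₁) (h : GX.t x = GX.s y) (l l' m' : L)
    (h₁ : aL l = GX.s x) (h₂ : aL l' = GX.t x)
    (h₃ : aL l' = GX.s y) (h₄ : aL m' = GX.t y)
    (h₅ : aL l = GX.s (GX.m x y h)) (h₆ : aL m' = GX.t (GX.m x y h)),
    c₁ = Quot.mk _ ⟨(x, l, l'), h₁, h₂⟩ ∧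
    c₂ = Quot.mk _ ⟨(y, l', m'), h₃, h₄⟩ ∧
    c₃ = Quot.mk _ ⟨(GX.m x y h, l, m'), h₅, h₆⟩

section Helpers

variable {X₁ X₀ L : Type*} (GX : PreGroupoid X₁ X₀)
  (aL : L → X₀) (smulL : Circle → L → L)

theorem m_congr {x x' y y' : X₁} (hx : x = x') (hy : y = y') (h h') :
    GX.m x y h = GX.m x' y' h' := by subst hx; subst hy; rfl

theorem diag_equiv
    (one_smulL : ∀ l, smulL 1 l = l)
    (mul_smulL : ∀ z w l, smulL z (smulL w l) = smulL (z * w) l) :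
    Equivalence (diag GX aL smulL) := by
  constructor
  · intro a
    exact ⟨1, by simp [one_smulL]⟩
  · rintro a b ⟨z, hz⟩
    refine ⟨z⁻¹, ?_⟩
    rw [hz]
    simp only [mul_smulL, inv_mul_cancel, one_smulL]
  · rintro a b c ⟨z, hz⟩ ⟨w, hw⟩
    refine ⟨w * z, ?_⟩
    rw [hw, hz]
    simp only [mul_smulL]

theorem mk_eq_iff
    (one_smulL : ∀ l, smulL 1 l = l)
    (mul_smulL : ∀ z w l, smulL z (smulL w l) = smulL (z * w) l)
    (a b : FP GX aL) :
    (Quot.mk (diag GX aL smulL) a = Quot.mk (diag GX aL smulL) b) ↔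
      diag GX aL smulL a b := by
  rw [Quot.eq]
  exact (diag_equiv GX aL smulL one_smulL mul_smulL).eqvGen_iff

end Helpers

/-- Let `L → X₀` be a principal `S¹`-bundle.  The associated
central extension `τ₂(L) = (s*L ×_{X₁} t*L̄)/S¹ → X₁ ⇉ X₀` admits a section
which is a groupoid homomorphism (i.e. is trivial as a central extension) if
and only if `L` carries a left `X₁`-action, compatible with the `S¹`-action,
making it an `S¹`-bundle over the groupoid `X₁ ⇉ X₀`. -/
theorem trivial_iff_action
    (one_smulL : ∀ l, smulL 1 l = l)
    (mul_smulL : ∀ z w l, smulL z (smulL w l) = smulL (z * w) l)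
    (aL_smulL : ∀ z l, aL (smulL z l) = aL l)
    (aL_surj : Function.Surjective aL)
    (principalL : ∀ l l', aL l = aL l' → ∃! z : Circle, smulL z l = l') :
    (∃ lactL : (x : X₁) → (l : L) → aL l = GX.s x → L,
        (∀ x l h, aL (lactL x l h) = GX.t x) ∧
        (∀ l h, lactL (GX.e (aL l)) l h = l) ∧
        (∀ x y l h₁ h₂ h₃ h₄, lactL y (lactL x l h₁) h₂ = lactL (GX.m x y h₃) l h₄) ∧
        (∀ z x l h h', lactL x (smulL z l) h' = smulL z (lactL x l h)))
    ↔
    (∃ σ : X₁ → E GX aL smulL,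
        (∀ r, projE GX aL smulL (σ r) = r) ∧
        (∀ x y h, IsMulE GX aL smulL (σ x) (σ y) (σ (GX.m x y h)))) := by
  constructor
  · rintro ⟨lact, hA, hE, hM, hS⟩
    classical
    have lcong : ∀ (x : X₁) (l l' : L) (h : aL l = GX.s x) (h' : aL l' = GX.s x),
        l = l' → lact x l h = lact x l' h' := by
      rintro x l l' h h' rfl; rfl
    obtain ⟨ℓ, hℓ⟩ : ∃ ℓ : X₀ → L, ∀ u, aL (ℓ u) = u :=
      ⟨fun u => Classical.choose (aL_surj u), fun u => Classical.choose_spec (aL_surj u)⟩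
    refine ⟨fun x => Quot.mk _ ⟨(x, ℓ (GX.s x), lact x (ℓ (GX.s x)) (hℓ _)), hℓ _, hA _ _ _⟩,
      fun r => rfl, ?_⟩
    intro x y h
    have hal : aL (ℓ (GX.s x)) = GX.s x := hℓ _
    have haly : aL (ℓ (GX.s y)) = GX.s y := hℓ _
    have halm : aL (ℓ (GX.s (GX.m x y h))) = GX.s (GX.m x y h) := hℓ _
    obtain ⟨z, hz⟩ := (principalL (ℓ (GX.s y)) (lact x (ℓ (GX.s x)) hal)
      (by rw [haly, hA, h])).exists
    obtain ⟨w, hw⟩ := (principalL (ℓ (GX.s (GX.m x y h))) (ℓ (GX.s x))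
      (by rw [halm, GX.s_m, hal])).exists
    have h2' : aL (lact x (ℓ (GX.s x)) hal) = GX.s y := by rw [hA, ← h]
    have hm' : smulL z (lact y (ℓ (GX.s y)) haly)
        = smulL w (lact (GX.m x y h) (ℓ (GX.s (GX.m x y h))) halm) := by
      calc smulL z (lact y (ℓ (GX.s y)) haly)
          = lact y (smulL z (ℓ (GX.s y))) (by rw [aL_smulL, haly]) := (hS z y _ haly _).symm
        _ = lact y (lact x (ℓ (GX.s x)) hal) h2' := lcong y _ _ _ _ hz
        _ = lact (GX.m x y h) (ℓ (GX.s x)) (by rw [GX.s_m, hal]) := hM x y _ hal h2' h _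
        _ = lact (GX.m x y h) (smulL w (ℓ (GX.s (GX.m x y h))))
            (by rw [aL_smulL, halm]) := (lcong _ _ _ _ _ hw).symm
        _ = smulL w (lact (GX.m x y h) (ℓ (GX.s (GX.m x y h))) halm) := hS w _ _ halm _
    refine ⟨x, y, h, ℓ (GX.s x), lact x (ℓ (GX.s x)) hal,
      smulL z (lact y (ℓ (GX.s y)) haly),
      hal, hA _ _ _, h2', by rw [aL_smulL, hA], by rw [GX.s_m, hal],
      by rw [aL_smulL, hA, GX.t_m], rfl, ?_, ?_⟩
    · refine Quot.sound ⟨z, ?_⟩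
      show (y, lact x (ℓ (GX.s x)) hal, smulL z (lact y (ℓ (GX.s y)) haly))
          = (y, smulL z (ℓ (GX.s y)), smulL z (lact y (ℓ (GX.s y)) haly))
      rw [hz]
    · refine Quot.sound ⟨w, ?_⟩
      show (GX.m x y h, ℓ (GX.s x), smulL z (lact y (ℓ (GX.s y)) haly))
          = (GX.m x y h, smulL w (ℓ (GX.s (GX.m x y h))),
              smulL w (lact (GX.m x y h) (ℓ (GX.s (GX.m x y h))) halm))
      rw [hw, ← hm']
  · rintro ⟨σ, hsec, hmul⟩
    classical
    have hrep : ∀ x : X₁, ∃ a : FP GX aL, Quot.mk (diag GX aL smulL) a = σ x :=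
      fun x => Quot.exists_rep (σ x)
    obtain ⟨r, hrσ⟩ : ∃ r : X₁ → FP GX aL, ∀ x, Quot.mk (diag GX aL smulL) (r x) = σ x :=
      ⟨fun x => Classical.choose (hrep x), fun x => Classical.choose_spec (hrep x)⟩
    have hr1 : ∀ x, (r x).val.1 = x := by
      intro x
      have h := hsec x
      rw [← hrσ x] at h
      exact h
    have hr21 : ∀ x, aL (r x).val.2.1 = GX.s x := fun x => by rw [(r x).property.1, hr1]
    have hr22 : ∀ x, aL (r x).val.2.2 = GX.t x := fun x => by rw [(r x).property.2, hr1]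
    have uniq : ∀ (l0 l : L), aL l0 = aL l → ∀ z w : Circle,
        smulL z l0 = l → smulL w l0 = l → z = w := by
      intro l0 l hh z w hz hw
      obtain ⟨u, -, hu⟩ := principalL l0 l hh
      rw [hu z hz, hu w hw]
    have hcz : ∀ (x : X₁) (l : L), aL l = GX.s x → ∃ z : Circle, smulL z (r x).val.2.1 = l :=
      fun x l h => (principalL (r x).val.2.1 l (by rw [hr21 x, h])).exists
    have hld : ∀ x l h, smulL (Classical.choose (hcz x l h)) (r x).val.2.1 = l :=
      fun x l h => Classical.choose_spec (hcz x l h)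
    have key : ∀ (x : X₁) (a : FP GX aL), Quot.mk (diag GX aL smulL) a = σ x →
        ∀ (z : Circle) (l : L) (h : aL l = GX.s x), smulL z a.val.2.1 = l →
          smulL (Classical.choose (hcz x l h)) (r x).val.2.2 = smulL z a.val.2.2 := by
      intro x a ha z l h hz
      have hd : diag GX aL smulL (r x) a := by
        rw [← mk_eq_iff GX aL smulL one_smulL mul_smulL, hrσ x, ha]
      obtain ⟨v, hv⟩ := hd
      have h21 : a.val.2.1 = smulL v (r x).val.2.1 := by rw [hv]
      have h22 : a.val.2.2 = smulL v (r x).val.2.2 := by rw [hv]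
      have hzv : smulL (z * v) (r x).val.2.1 = l := by rw [← mul_smulL, ← h21, hz]
      have heq : Classical.choose (hcz x l h) = z * v :=
        uniq (r x).val.2.1 l (by rw [hr21 x, h]) _ _ (hld x l h) hzv
      rw [heq, h22, mul_smulL]
    refine ⟨fun x l h => smulL (Classical.choose (hcz x l h)) (r x).val.2.2, ?_, ?_, ?_, ?_⟩
    · -- anchor
      intro x l h
      rw [aL_smulL, hr22]
    · -- identity
      intro l h
      beta_reduce
      have hcomp : GX.t (GX.e (aL l)) = GX.s (GX.e (aL l)) := by rw [GX.t_e, GX.s_e]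
      have hm1 : GX.m (GX.e (aL l)) (GX.e (aL l)) hcomp = GX.e (aL l) :=
        (m_congr GX (congrArg GX.e (GX.s_e (aL l))).symm rfl hcomp
          (by rw [GX.t_e])).trans (GX.e_m (GX.e (aL l)) (by rw [GX.t_e]))
      have hmm := hmul (GX.e (aL l)) (GX.e (aL l)) hcomp
      rw [hm1] at hmm
      obtain ⟨x', y', h', l₁, l₁', m₁', p₁, p₂, p₃, p₄, p₅, p₆, e₁, e₂, e₃⟩ := hmm
      have hx' : x' = GX.e (aL l) := by
        have hp := hsec (GX.e (aL l))
        rw [e₁] at hp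
        exact hp
      have e13 : diag GX aL smulL (⟨(x', l₁, l₁'), p₁, p₂⟩ : FP GX aL)
          ⟨(GX.m x' y' h', l₁, m₁'), p₅, p₆⟩ := by
        exact (mk_eq_iff GX aL smulL one_smulL mul_smulL _ _).mp (e₁.symm.trans e₃)
      obtain ⟨v, hv⟩ := e13
      have hv2 : l₁ = smulL v l₁ := congrArg (fun p => p.2.1) hv
      have hv3 : m₁' = smulL v l₁' := congrArg (fun p => p.2.2) hv
      have hv1 : v = 1 := uniq l₁ l₁ rfl v 1 hv2.symm (one_smulL l₁)
      have hm₁' : m₁' = l₁' := by rw [hv3, hv1, one_smulL]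
      have e12 : diag GX aL smulL (⟨(x', l₁, l₁'), p₁, p₂⟩ : FP GX aL)
          ⟨(y', l₁', m₁'), p₃, p₄⟩ := by
        exact (mk_eq_iff GX aL smulL one_smulL mul_smulL _ _).mp (e₁.symm.trans e₂)
      obtain ⟨t, ht⟩ := e12
      have ht2 : l₁' = smulL t l₁ := congrArg (fun p => p.2.1) ht
      have ht3 : m₁' = smulL t l₁' := congrArg (fun p => p.2.2) ht
      have ht1 : t = 1 := uniq l₁' l₁' rfl t 1 (by rw [← ht3, hm₁']) (one_smulL l₁')
      have hl₁ : l₁' = l₁ := by rw [ht2, ht1, one_smulL]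
      obtain ⟨z, hz⟩ := (principalL l₁ l (by rw [p₁, hx', GX.s_e])).exists
      have hk := key (GX.e (aL l)) ⟨(x', l₁, l₁'), p₁, p₂⟩ e₁.symm z l h hz
      rw [hk]
      show smulL z l₁' = l
      rw [hl₁, hz]
    · -- composition
      intro x y l h₁ h₂ h₃ h₄
      obtain ⟨x', y', h', l₁, l₁', m₁', p₁, p₂, p₃, p₄, p₅, p₆, e₁, e₂, e₃⟩ := hmul x y h₃
      have hx' : x' = x := by
        have hp := hsec x; rw [e₁] at hp; exact hp
      have hy' : y' = y := by
        have hp := hsec y; rw [e₂] at hp; exact hp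
      obtain ⟨z, hz⟩ := (principalL l₁ l (by rw [p₁, hx', h₁])).exists
      have k₁ := key x ⟨(x', l₁, l₁'), p₁, p₂⟩ e₁.symm z l h₁ hz
      have hzl : aL (smulL z l₁') = GX.s y := by rw [aL_smulL, p₃, hy']
      have k₂ := key y ⟨(y', l₁', m₁'), p₃, p₄⟩ e₂.symm z (smulL z l₁') hzl rfl
      have k₃ := key (GX.m x y h₃) ⟨(GX.m x' y' h', l₁, m₁'), p₅, p₆⟩ e₃.symm z l h₄ hz
      have lcong : ∀ (a : X₁) (b c : L) (hb : aL b = GX.s a) (hc : aL c = GX.s a),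
          b = c → smulL (Classical.choose (hcz a b hb)) (r a).val.2.2
            = smulL (Classical.choose (hcz a c hc)) (r a).val.2.2 := by
        rintro a b c hb hc rfl; rfl
      calc smulL (Classical.choose (hcz y
              (smulL (Classical.choose (hcz x l h₁)) (r x).val.2.2) h₂)) (r y).val.2.2
          = smulL (Classical.choose (hcz y (smulL z l₁') hzl)) (r y).val.2.2 :=
            lcong y _ _ h₂ hzl k₁
        _ = smulL z m₁' := k₂
        _ = smulL (Classical.choose (hcz (GX.m x y h₃) l h₄)) (r (GX.m x y h₃)).val.2.2 :=
            k₃.symm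
    · -- smul compatibility
      intro z x l h h'
      beta_reduce
      have hk1 := key x (r x) (hrσ x) (z * Classical.choose (hcz x l h)) (smulL z l) h'
        (by rw [← mul_smulL, hld x l h])
      have hk2 := key x (r x) (hrσ x) (Classical.choose (hcz x l h)) l h (hld x l h)
      rw [hk1, hk2, mul_smulL]

end Stmt6
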